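/- Let p be a prime and let m be an integer with m > 1. Then there exist sets K₀,…,K_{p^{m−1}−1}, each contained in {p, p−1}, and a (p(p^m−1), {K₀,…,K_{p^{m−1}−1}}, 1)-BNCDP of size p^{m−1} over Z_{p(p^m−1)} such that for each of the p^{m−1} CDPs, the set of all elements of its base blocks is a complete system of representatives for the cosets of (p^m−1)·Z_{p(p^m−1)} in Z_{p(p^m−1)}. -/

import Mathlib

open scoped Classical

/-- The multiset of all elements of the base blocks of a family `B`. -/
def blockElems {n u : ℕ} (B : Fin u → Finset (ZMod n)) : Multiset (ZMod n) :=
  ∑ i : Fin u, (B i).val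

/-- The multiset of internal differences `Δ(B)`. -/
def deltaList {n u : ℕ} (B : Fin u → Finset (ZMod n)) : Multiset (ZMod n) :=
  ∑ i : Fin u, (((B i) ×ˢ (B i)).filter (fun p => p.1 ≠ p.2)).val.map (fun p => p.1 - p.2)

/-- The multiset of external differences `Δ_E(B, B')`. -/
def deltaE {n u : ℕ} (B B' : Fin u → Finset (ZMod n)) : Multiset (ZMod n) :=
  ∑ i : Fin u, ((B i) ×ˢ (B' i)).val.map (fun p => p.2 - p.1)

/-- `x` is a multiple of `d` in `ZMod n`, i.e. `x ∈ d·Z_n`. -/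
def inSub (n d : ℕ) (x : ZMod n) : Prop := ∃ y : ZMod n, x = (d : ZMod n) * y

/-- The multiset `T` is a complete system of representatives for the cosets of
`d·Z_n` in `Z_n`: each coset contains exactly one element of `T`
(counted with multiplicity). -/
def IsCSR (n d : ℕ) (T : Multiset (ZMod n)) : Prop :=
  ∀ x : ZMod n, Multiset.card (T.filter (fun t => inSub n d (x - t))) = 1

/-- `B` is an `(n, K, λ)`-CDP. -/
def IsCDP (n u lam : ℕ) (K : Set ℕ) (B : Fin u → Finset (ZMod n)) : Prop :=
  (∀ i, (B i).card ∈ K) ∧ ∀ x : ZMod n, x ≠ 0 → (deltaList B).count x ≤ lam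

/-- `B` is an `(n, {K₀,…,K_{M−1}}, λ)`-BNCDP of size `u`. -/
def IsBNCDP (n M u lam : ℕ) (K : Fin M → Set ℕ)
    (B : Fin M → Fin u → Finset (ZMod n)) : Prop :=
  (∀ j, IsCDP n u lam (K j) (B j)) ∧
  ∀ j j' : Fin M, j ≠ j' → ∀ x : ZMod n, (deltaE (B j) (B j')).count x ≤ lam

/-- `B` is an `(n, g, K, 1)`-CRDP (relative to the subgroup `H = (n/g)·Z_n` of order `g`). -/
def IsCRDP (n g u : ℕ) (K : Set ℕ) (B : Fin u → Finset (ZMod n)) : Prop :=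
  (∀ i, (B i).card ∈ K) ∧
  (∀ x : ZMod n, inSub n (n / g) x → (deltaList B).count x = 0) ∧
  (∀ x : ZMod n, (deltaList B).count x ≤ 1)

/-- `B` is an `(n, g, {K₀,…,K_{M−1}}, 1)`-BNCRDP of size `u`. -/
def IsBNCRDP (n g M u : ℕ) (K : Fin M → Set ℕ)
    (B : Fin M → Fin u → Finset (ZMod n)) : Prop :=
  (∀ j, IsCRDP n g u (K j) (B j)) ∧
  ∀ j j' : Fin M, j ≠ j' →
    (∀ x : ZMod n, inSub n (n / g) x → (deltaE (B j) (B j')).count x = 0) ∧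
    (∀ x : ZMod n, (deltaE (B j) (B j')).count x ≤ 1)

namespace S4

open Finset

variable (p m : ℕ) [Fact p.Prime]

abbrev Fq := GaloisField p m

noncomputable instance : Fintype (Fq p m) := Fintype.ofFinite _

abbrev NN : ℕ := p ^ m - 1

noncomputable abbrev UU : Submodule (ZMod p) (Fq p m) := Submodule.span (ZMod p) {(1 : Fq p m)}

noncomputable def VV : Submodule (ZMod p) (Fq p m) :=
  (Submodule.exists_isCompl (UU p m)).choose

lemma hUV : IsCompl (UU p m) (VV p m) := (Submodule.exists_isCompl (UU p m)).choose_spec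

noncomputable def prU : Fq p m →ₗ[ZMod p] UU p m :=
  Submodule.linearProjOfIsCompl _ _ (hUV p m)

noncomputable def prV : Fq p m →ₗ[ZMod p] VV p m :=
  Submodule.linearProjOfIsCompl _ _ (hUV p m).symm

lemma decomp (z : Fq p m) : (prU p m z : Fq p m) + (prV p m z : Fq p m) = z :=
  Submodule.projection_add_projection_eq_self (hUV p m) z

noncomputable def u1 : UU p m := ⟨1, Submodule.mem_span_singleton_self 1⟩

lemma smul_one_mem (c : ZMod p) : c • (1 : Fq p m) ∈ UU p m :=
  Submodule.smul_mem _ c (Submodule.mem_span_singleton_self 1)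

noncomputable def eU : ZMod p ≃ₗ[ZMod p] UU p m :=
  LinearEquiv.ofBijective (LinearMap.toSpanSingleton (ZMod p) (UU p m) (u1 p m))
    (by
      constructor
      · intro a b hab
        have h : a • (1 : Fq p m) = b • (1 : Fq p m) := by
          have := congrArg (fun x : UU p m => (x : Fq p m)) hab
          simpa [LinearMap.toSpanSingleton_apply, u1] using this
        have h2 : (a - b) • (1 : Fq p m) = 0 := by
          rw [sub_smul, h, sub_self]
        rcases smul_eq_zero.mp h2 with h3 | h3
        · exact sub_eq_zero.mp h3
        · exact absurd h3 one_ne_zero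
      · rintro ⟨u, hu⟩
        obtain ⟨a, ha⟩ := Submodule.mem_span_singleton.mp hu
        exact ⟨a, Subtype.ext (by simpa [LinearMap.toSpanSingleton_apply, u1] using ha)⟩)

lemma coe_eU (c : ZMod p) : ((eU p m c : UU p m) : Fq p m) = c • (1 : Fq p m) := by
  simp [eU, LinearMap.toSpanSingleton_apply, u1]

noncomputable def ψ : Fq p m →ₗ[ZMod p] ZMod p :=
  ((eU p m).symm : UU p m →ₗ[ZMod p] ZMod p) ∘ₗ prU p m

lemma psi_smul_one (c : ZMod p) : ψ p m (c • (1 : Fq p m)) = c := by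
  have h1 : prU p m (c • (1 : Fq p m)) = eU p m c := by
    have : (c • (1 : Fq p m)) = ((eU p m c : UU p m) : Fq p m) := (coe_eU p m c).symm
    rw [this]
    exact Submodule.linearProjOfIsCompl_apply_left (hUV p m) _
  simp only [ψ, LinearMap.coe_comp, Function.comp_apply, LinearEquiv.coe_coe, h1,
    LinearEquiv.symm_apply_apply]

lemma psi_one : ψ p m 1 = 1 := by
  have := psi_smul_one p m 1
  simpa using this

lemma psi_V (w : VV p m) : ψ p m (w : Fq p m) = 0 := by
  have h1 : prU p m (w : Fq p m) = 0 :=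
    Submodule.projectionOnto_apply_of_mem_right (hUV p m) w.2
  simp only [ψ, LinearMap.coe_comp, Function.comp_apply, LinearEquiv.coe_coe, h1]
  exact (LinearEquiv.map_eq_zero_iff _).mpr rfl

lemma prV_smul_one (c : ZMod p) : prV p m (c • (1 : Fq p m)) = 0 :=
  Submodule.projectionOnto_apply_of_mem_right (hUV p m).symm (smul_one_mem p m c)

lemma prV_V (w : VV p m) : prV p m (w : Fq p m) = w :=
  Submodule.linearProjOfIsCompl_apply_left (hUV p m).symm w

lemma repr (z : Fq p m) : z = (ψ p m z) • (1 : Fq p m) + ((prV p m z : Fq p m)) := by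
  have h1 : ((prU p m z : UU p m) : Fq p m) = (ψ p m z) • (1 : Fq p m) := by
    have : prU p m z = eU p m (ψ p m z) := by
      simp [ψ]
    rw [this, coe_eU]
  rw [← h1]
  exact (decomp p m z).symm

lemma ext_pv {z z' : Fq p m} (h1 : ψ p m z = ψ p m z') (h2 : prV p m z = prV p m z') :
    z = z' := by
  rw [repr p m z, repr p m z', h1, h2]

/- Group-theoretic side. -/

noncomputable def gg : (Fq p m)ˣ :=
  (IsCyclic.exists_generator (α := (Fq p m)ˣ)).choose

lemma gg_spec : ∀ x : (Fq p m)ˣ, x ∈ Subgroup.zpowers (gg p m) :=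
  (IsCyclic.exists_generator (α := (Fq p m)ˣ)).choose_spec

lemma card_Fq (hm : m ≠ 0) : Fintype.card (Fq p m) = p ^ m := by
  rw [← Nat.card_eq_fintype_card, GaloisField.card p m hm]

lemma card_units (hm : m ≠ 0) : Fintype.card (Fq p m)ˣ = NN p m := by
  rw [Fintype.card_units, card_Fq p m hm]

lemma NN_pos (hm : m ≠ 0) : 0 < NN p m := by
  have hp2 : 2 ≤ p := (Fact.out : p.Prime).two_le
  have h2 : 2 ≤ p ^ m := le_trans hp2 (Nat.le_self_pow hm p)
  show 0 < p ^ m - 1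
  omega

noncomputable def intHom : ℤ →+ Additive (Fq p m)ˣ :=
  AddMonoidHom.mk' (fun z => Additive.ofMul (gg p m ^ z))
    (by intro a b; simp [zpow_add])

noncomputable def ellHom (hm : m ≠ 0) : ZMod (NN p m) →+ Additive (Fq p m)ˣ :=
  ZMod.lift _ ⟨intHom p m,
    by
      have h1 : gg p m ^ ((NN p m : ℕ) : ℤ) = 1 := by
        rw [zpow_natCast, ← card_units p m hm]; exact pow_card_eq_one
      show Additive.ofMul (gg p m ^ ((NN p m : ℕ) : ℤ)) = 0
      rw [h1]; exact ofMul_one⟩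

lemma ellHom_bij (hm : m ≠ 0) : Function.Bijective (ellHom p m hm) := by
  haveI : NeZero (NN p m) := ⟨(NN_pos p m hm).ne'⟩
  rw [Fintype.bijective_iff_surjective_and_card]
  constructor
  · intro a
    obtain ⟨z, hz⟩ := gg_spec p m (Additive.toMul a)
    refine ⟨(z : ZMod (NN p m)), ?_⟩
    rw [ellHom, ZMod.lift_coe]
    show Additive.ofMul (gg p m ^ z) = a
    rw [show gg p m ^ z = Additive.toMul a from hz]
    rfl
  · rw [ZMod.card]
    exact ((Fintype.card_congr (Additive.toMul (α := (Fq p m)ˣ))).trans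
      (card_units p m hm)).symm

noncomputable def ℓe (hm : m ≠ 0) : ZMod (NN p m) ≃+ Additive (Fq p m)ˣ :=
  AddEquiv.ofBijective _ (ellHom_bij p m hm)

noncomputable def Ind (hm : m ≠ 0) (x : (Fq p m)ˣ) : ZMod (NN p m) :=
  (ℓe p m hm).symm (Additive.ofMul x)

lemma Ind_mul (hm : m ≠ 0) (x y : (Fq p m)ˣ) :
    Ind p m hm (x * y) = Ind p m hm x + Ind p m hm y := by
  unfold Ind
  rw [← map_add]
  rfl

lemma Ind_one (hm : m ≠ 0) : Ind p m hm 1 = 0 := by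
  unfold Ind
  simp [ofMul_one]

lemma Ind_inv (hm : m ≠ 0) (x : (Fq p m)ˣ) : Ind p m hm x⁻¹ = - Ind p m hm x := by
  have h := Ind_mul p m hm x x⁻¹
  rw [mul_inv_cancel, Ind_one] at h
  have h2 : Ind p m hm x + Ind p m hm x⁻¹ = 0 := h.symm
  linear_combination h2

lemma Ind_inj (hm : m ≠ 0) : Function.Injective (Ind p m hm) := by
  intro x y hxy
  have := (ℓe p m hm).symm.injective hxy
  exact Additive.ofMul.injective this

lemma Ind_surj (hm : m ≠ 0) : Function.Surjective (Ind p m hm) := by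
  intro s
  exact ⟨Additive.toMul ((ℓe p m hm) s), by unfold Ind; simp⟩

lemma copr (hm : m ≠ 0) : Nat.Coprime p (NN p m) := by
  have hp : p.Prime := Fact.out
  rw [hp.coprime_iff_not_dvd]
  intro hdvd
  have h1 : p ∣ p ^ m := dvd_pow_self p hm
  have h2 : (1:ℕ) ≤ p ^ m := Nat.one_le_pow _ _ hp.pos
  have h3 : p ∣ p ^ m - (p ^ m - 1) := Nat.dvd_sub h1 hdvd
  rw [Nat.sub_sub_self h2] at h3
  exact Nat.Prime.one_lt hp |>.ne' (Nat.dvd_one.mp h3)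

noncomputable def crt (hm : m ≠ 0) : ZMod (p * NN p m) ≃+* ZMod p × ZMod (NN p m) :=
  ZMod.chineseRemainder (copr p m hm)

noncomputable def Θ (hm : m ≠ 0) (a : ZMod p) (x : (Fq p m)ˣ) : ZMod (p * NN p m) :=
  (crt p m hm).symm (a, Ind p m hm x)

lemma theta_sub (hm : m ≠ 0) (a b : ZMod p) (x y : (Fq p m)ˣ) :
    Θ p m hm a x - Θ p m hm b y = Θ p m hm (a - b) (x * y⁻¹) := by
  unfold Θ
  rw [← map_sub]
  congr 1
  rw [Prod.mk_sub_mk]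
  congr 1
  rw [Ind_mul, Ind_inv]
  ring

lemma theta_inj (hm : m ≠ 0) {a b : ZMod p} {x y : (Fq p m)ˣ}
    (h : Θ p m hm a x = Θ p m hm b y) : a = b ∧ x = y := by
  unfold Θ at h
  have h2 := (crt p m hm).symm.injective h
  have ha : a = b := congrArg Prod.fst h2
  have hx : Ind p m hm x = Ind p m hm y := congrArg Prod.snd h2
  exact ⟨ha, Ind_inj p m hm hx⟩

lemma card_VV (hm : m ≠ 0) : Fintype.card (VV p m) = p ^ (m - 1) := by
  have e := Submodule.prodEquivOfIsCompl _ _ (hUV p m)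
  have h1 : Fintype.card (UU p m × VV p m) = Fintype.card (Fq p m) :=
    Fintype.card_congr e.toEquiv
  rw [Fintype.card_prod, card_Fq p m hm] at h1
  have h2 : Fintype.card (UU p m) = p := by
    rw [← Fintype.card_congr (eU p m).toEquiv, ZMod.card]
  rw [h2] at h1
  have h3 : p ^ m = p * p ^ (m - 1) := by
    conv_lhs => rw [show m = 1 + (m - 1) by omega]
    rw [pow_add, pow_one]
  rw [h3] at h1
  exact Nat.eq_of_mul_eq_mul_left (Fact.out : p.Prime).pos h1

noncomputable def eV (hm : m ≠ 0) : Fin (p ^ (m - 1)) ≃ VV p m :=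
  (Fintype.equivFinOfCardEq (card_VV p m hm)).symm

noncomputable def tt (hm : m ≠ 0) (j : Fin (p ^ (m - 1))) : Fq p m := (eV p m hm j : Fq p m)

noncomputable def vv (hm : m ≠ 0) (j : Fin (p ^ (m - 1))) : Fq p m := tt p m hm j + 1

lemma psi_tt (hm : m ≠ 0) (j : Fin (p ^ (m - 1))) : ψ p m (tt p m hm j) = 0 :=
  psi_V p m _

lemma prV_tt (hm : m ≠ 0) (j : Fin (p ^ (m - 1))) :
    prV p m (tt p m hm j) = eV p m hm j := prV_V p m _

lemma tt_inj (hm : m ≠ 0) {j j' : Fin (p ^ (m - 1))}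
    (h : tt p m hm j = tt p m hm j') : j = j' :=
  (eV p m hm).injective (Subtype.ext h)

lemma vv_ne (hm : m ≠ 0) (j : Fin (p ^ (m - 1))) : vv p m hm j ≠ 0 := by
  intro h
  have h1 : tt p m hm j = -1 := by
    have := h
    unfold vv at this
    linear_combination this
  have h2 : ψ p m (tt p m hm j) = ψ p m (-1 : Fq p m) := by rw [h1]
  rw [psi_tt] at h2
  have h3 : ψ p m (-1 : Fq p m) = -1 := by
    rw [map_neg, psi_one]
  rw [h3] at h2
  have : (1 : ZMod p) = 0 := by linear_combination h2
  exact one_ne_zero this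

noncomputable def Sf (hm : m ≠ 0) (j i : Fin (p ^ (m - 1))) : Finset (Fq p m)ˣ :=
  Finset.univ.filter
    (fun x => prV p m (vv p m hm j * (x : Fq p m) + tt p m hm j) = eV p m hm i)

lemma mem_Sf (hm : m ≠ 0) {j i : Fin (p ^ (m - 1))} {x : (Fq p m)ˣ} :
    x ∈ Sf p m hm j i ↔
      prV p m (vv p m hm j * (x : Fq p m) + tt p m hm j) = eV p m hm i := by
  simp [Sf]

noncomputable def θf (hm : m ≠ 0) (j : Fin (p ^ (m - 1))) (x : (Fq p m)ˣ) :
    ZMod (p * NN p m) :=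
  Θ p m hm (ψ p m (vv p m hm j * (x : Fq p m))) x

lemma θf_inj (hm : m ≠ 0) (j : Fin (p ^ (m - 1))) : Function.Injective (θf p m hm j) := by
  intro x y h
  exact (theta_inj p m hm h).2

noncomputable def AA (hm : m ≠ 0) (j i : Fin (p ^ (m - 1))) : Finset (ZMod (p * NN p m)) :=
  (Sf p m hm j i).map ⟨θf p m hm j, θf_inj p m hm j⟩

lemma mem_AA (hm : m ≠ 0) {j i : Fin (p ^ (m - 1))} {d : ZMod (p * NN p m)} :
    d ∈ AA p m hm j i ↔ ∃ x ∈ Sf p m hm j i, θf p m hm j x = d := by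
  simp [AA]

lemma uniq_int (hm : m ≠ 0) (j : Fin (p ^ (m - 1))) {i i' x y x' y' : _}
    (hx : x ∈ Sf p m hm j i) (hy : y ∈ Sf p m hm j i)
    (hx' : x' ∈ Sf p m hm j i') (hy' : y' ∈ Sf p m hm j i')
    (hxy : x ≠ y) (heq : θf p m hm j x - θf p m hm j y = θf p m hm j x' - θf p m hm j y') :
    i = i' ∧ x = x' ∧ y = y' := by
  rw [mem_Sf] at hx hy hx' hy'
  unfold θf at heq
  rw [theta_sub, theta_sub] at heq
  obtain ⟨E1, E2⟩ := theta_inj p m hm heq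
  set v := vv p m hm j with hv
  set t := tt p m hm j with ht
  -- β
  set β := x * y⁻¹ with hβ
  have hu : β * y = x := inv_mul_cancel_right x y
  have hu' : β * y' = x' := by rw [E2]; exact inv_mul_cancel_right x' y'
  have hu2 : (β : Fq p m) * (y : Fq p m) = (x : Fq p m) := by rw [← Units.val_mul, hu]
  have hu2' : (β : Fq p m) * (y' : Fq p m) = (x' : Fq p m) := by rw [← Units.val_mul, hu']
  -- prV part
  have h5 : prV p m (v * (x : Fq p m) - v * (y : Fq p m)) = 0 := by
    have harr : v * (x : Fq p m) - v * (y : Fq p m)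
        = (v * (x : Fq p m) + t) - (v * (y : Fq p m) + t) := by ring
    rw [harr, map_sub, hx, hy, sub_self]
  have h5' : prV p m (v * (x' : Fq p m) - v * (y' : Fq p m)) = 0 := by
    have harr : v * (x' : Fq p m) - v * (y' : Fq p m)
        = (v * (x' : Fq p m) + t) - (v * (y' : Fq p m) + t) := by ring
    rw [harr, map_sub, hx', hy', sub_self]
  have h6 : ψ p m (v * (x : Fq p m) - v * (y : Fq p m))
      = ψ p m (v * (x' : Fq p m) - v * (y' : Fq p m)) := by
    rw [map_sub, map_sub]; exact E1
  have key : v * (x : Fq p m) - v * (y : Fq p m)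
      = v * (x' : Fq p m) - v * (y' : Fq p m) :=
    ext_pv p m h6 (h5.trans h5'.symm)
  have hfac : v * (y : Fq p m) * ((β : Fq p m) - 1)
      = v * (y' : Fq p m) * ((β : Fq p m) - 1) := by
    rw [← hu2, ← hu2'] at key
    linear_combination key
  have hβ1 : (β : Fq p m) - 1 ≠ 0 := by
    intro h0
    have : (β : Fq p m) = 1 := by linear_combination h0
    have : β = 1 := Units.val_eq_one.mp this
    rw [this, one_mul] at hu
    exact hxy hu.symm
  have h7 : v * (y : Fq p m) = v * (y' : Fq p m) := mul_right_cancel₀ hβ1 hfac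
  have h8 : (y : Fq p m) = (y' : Fq p m) := mul_left_cancel₀ (vv_ne p m hm j) h7
  have hyy : y = y' := Units.ext h8
  have hxx : x = x' := by rw [← hu, ← hu', hyy]
  refine ⟨?_, hxx, hyy⟩
  apply (eV p m hm).injective
  rw [← hx, ← hx', hxx]

lemma uniq_cross (hm : m ≠ 0) {j j' : Fin (p ^ (m - 1))} (hjj : j ≠ j')
    {i i' x y x' y' : _}
    (hx : x ∈ Sf p m hm j i) (hy : y ∈ Sf p m hm j' i)
    (hx' : x' ∈ Sf p m hm j i') (hy' : y' ∈ Sf p m hm j' i')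
    (heq : θf p m hm j' y - θf p m hm j x = θf p m hm j' y' - θf p m hm j x') :
    i = i' ∧ x = x' ∧ y = y' := by
  rw [mem_Sf] at hx hy hx' hy'
  unfold θf at heq
  rw [theta_sub, theta_sub] at heq
  obtain ⟨E1, E2⟩ := theta_inj p m hm heq
  set vj := vv p m hm j with hvj
  set vj' := vv p m hm j' with hvj'
  set tj := tt p m hm j with htj
  set tj' := tt p m hm j' with htj'
  set β := y * x⁻¹ with hβ
  have hu : β * x = y := inv_mul_cancel_right y x
  have hu' : β * x' = y' := by rw [E2]; exact inv_mul_cancel_right y' x'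
  have hu2 : (β : Fq p m) * (x : Fq p m) = (y : Fq p m) := by rw [← Units.val_mul, hu]
  have hu2' : (β : Fq p m) * (x' : Fq p m) = (y' : Fq p m) := by rw [← Units.val_mul, hu']
  set c := vj' * (β : Fq p m) - vj with hc
  have hcx : c * (x : Fq p m)
      = (vj' * (y : Fq p m) + tj') - (vj * (x : Fq p m) + tj) - (tj' - tj) := by
    rw [← hu2]; ring
  have hcx' : c * (x' : Fq p m)
      = (vj' * (y' : Fq p m) + tj') - (vj * (x' : Fq p m) + tj) - (tj' - tj) := by
    rw [← hu2']; ring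
  have h5 : prV p m (c * (x : Fq p m)) = - prV p m (tj' - tj) := by
    rw [hcx, map_sub, map_sub, hx, hy, sub_self, zero_sub]
  have h5' : prV p m (c * (x' : Fq p m)) = - prV p m (tj' - tj) := by
    rw [hcx', map_sub, map_sub, hx', hy', sub_self, zero_sub]
  have hδ : prV p m (tj' - tj) ≠ 0 := by
    rw [map_sub, htj, htj', prV_tt, prV_tt]
    intro h0
    have : eV p m hm j' = eV p m hm j := by
      have := sub_eq_zero.mp h0
      exact this
    exact hjj ((eV p m hm).injective this).symm
  have hcne : c ≠ 0 := by
    intro h0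
    rw [h0, zero_mul, map_zero] at h5
    exact hδ (neg_eq_zero.mp h5.symm)
  have hcx2 : c * (x : Fq p m) = vj' * (y : Fq p m) - vj * (x : Fq p m) := by
    rw [← hu2]; ring
  have hcx2' : c * (x' : Fq p m) = vj' * (y' : Fq p m) - vj * (x' : Fq p m) := by
    rw [← hu2']; ring
  have h6 : ψ p m (c * (x : Fq p m)) = ψ p m (c * (x' : Fq p m)) := by
    rw [hcx2, hcx2', map_sub, map_sub]; exact E1
  have key : c * (x : Fq p m) = c * (x' : Fq p m) :=
    ext_pv p m h6 (h5.trans h5'.symm)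
  have h8 : (x : Fq p m) = (x' : Fq p m) := mul_left_cancel₀ hcne key
  have hxx : x = x' := Units.ext h8
  have hyy : y = y' := by rw [← hu, ← hu', hxx]
  refine ⟨?_, hxx, hyy⟩
  apply (eV p m hm).injective
  rw [← hx, ← hx', hxx]

lemma count_map_finset {γ : Type*} (f : γ → ZMod (p * NN p m)) (T : Finset γ)
    (z : ZMod (p * NN p m)) :
    Multiset.count z (T.val.map f) = (T.filter (fun a => z = f a)).card := by
  rw [Multiset.count_map]
  rfl

lemma count_deltaList_le (hm : m ≠ 0) (j : Fin (p ^ (m - 1))) (z : ZMod (p * NN p m)) :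
    (deltaList (AA p m hm j)).count z ≤ 1 := by
  unfold deltaList
  rw [Multiset.count_sum']
  have hcount : ∀ i : Fin (p ^ (m - 1)),
      Multiset.count z
        ((((AA p m hm j i) ×ˢ (AA p m hm j i)).filter (fun q => q.1 ≠ q.2)).val.map
          (fun q => q.1 - q.2))
      = ((((AA p m hm j i) ×ˢ (AA p m hm j i)).filter (fun q => q.1 ≠ q.2)).filter
          (fun q => z = q.1 - q.2)).card := fun i => count_map_finset p m _ _ z
  rw [Finset.sum_congr rfl (fun i _ => hcount i)]
  rw [← Finset.card_sigma]
  apply Finset.card_le_one.mpr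
  rintro ⟨i, d1, d2⟩ hmem ⟨i', d1', d2'⟩ hmem'
  simp only [Finset.mem_sigma, Finset.mem_univ, true_and, Finset.mem_filter,
    Finset.mem_product] at hmem hmem'
  obtain ⟨⟨⟨hd1, hd2⟩, hne⟩, hz⟩ := hmem
  obtain ⟨⟨⟨hd1', hd2'⟩, hne'⟩, hz'⟩ := hmem'
  rw [mem_AA] at hd1 hd2 hd1' hd2'
  obtain ⟨x, hxS, rfl⟩ := hd1
  obtain ⟨y, hyS, rfl⟩ := hd2
  obtain ⟨x', hxS', rfl⟩ := hd1'
  obtain ⟨y', hyS', rfl⟩ := hd2'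
  have hxy : x ≠ y := fun h => hne (by rw [h])
  have heq : θf p m hm j x - θf p m hm j y = θf p m hm j x' - θf p m hm j y' := by
    rw [← hz, ← hz']
  obtain ⟨hi, hxx, hyy⟩ := uniq_int p m hm j hxS hyS hxS' hyS' hxy heq
  subst hi; rw [hxx, hyy]

lemma count_deltaE_le (hm : m ≠ 0) {j j' : Fin (p ^ (m - 1))} (hjj : j ≠ j')
    (z : ZMod (p * NN p m)) :
    (deltaE (AA p m hm j) (AA p m hm j')).count z ≤ 1 := by
  unfold deltaE
  rw [Multiset.count_sum']
  have hcount : ∀ i : Fin (p ^ (m - 1)),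
      Multiset.count z (((AA p m hm j i) ×ˢ (AA p m hm j' i)).val.map (fun q => q.2 - q.1))
      = (((AA p m hm j i) ×ˢ (AA p m hm j' i)).filter (fun q => z = q.2 - q.1)).card :=
    fun i => count_map_finset p m _ _ z
  rw [Finset.sum_congr rfl (fun i _ => hcount i)]
  rw [← Finset.card_sigma]
  apply Finset.card_le_one.mpr
  rintro ⟨i, d1, d2⟩ hmem ⟨i', d1', d2'⟩ hmem'
  simp only [Finset.mem_sigma, Finset.mem_univ, true_and, Finset.mem_filter,
    Finset.mem_product] at hmem hmem'
  obtain ⟨⟨hd1, hd2⟩, hz⟩ := hmem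
  obtain ⟨⟨hd1', hd2'⟩, hz'⟩ := hmem'
  rw [mem_AA] at hd1 hd2 hd1' hd2'
  obtain ⟨x, hxS, rfl⟩ := hd1
  obtain ⟨y, hyS, rfl⟩ := hd2
  obtain ⟨x', hxS', rfl⟩ := hd1'
  obtain ⟨y', hyS', rfl⟩ := hd2'
  have heq : θf p m hm j' y - θf p m hm j x = θf p m hm j' y' - θf p m hm j x' := by
    rw [← hz, ← hz']
  obtain ⟨hi, hxx, hyy⟩ := uniq_cross p m hm hjj hxS hyS hxS' hyS' heq
  subst hi; rw [hxx, hyy]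

noncomputable def sol (hm : m ≠ 0) (j i : Fin (p ^ (m - 1))) (c : ZMod p) : Fq p m :=
  (vv p m hm j)⁻¹ * (c • (1 : Fq p m) + (tt p m hm i - tt p m hm j))

lemma sol_eq (hm : m ≠ 0) (j i : Fin (p ^ (m - 1))) (c : ZMod p) :
    vv p m hm j * sol p m hm j i c + tt p m hm j = c • (1 : Fq p m) + tt p m hm i := by
  unfold sol
  field_simp [vv_ne p m hm j]
  ring

lemma mem_sol (hm : m ≠ 0) (j i : Fin (p ^ (m - 1))) (c : ZMod p) :
    prV p m (vv p m hm j * sol p m hm j i c + tt p m hm j) = eV p m hm i := by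
  rw [sol_eq, map_add, prV_smul_one, prV_tt, zero_add]

lemma psi_sol (hm : m ≠ 0) (j i : Fin (p ^ (m - 1))) (c : ZMod p) :
    ψ p m (vv p m hm j * sol p m hm j i c + tt p m hm j) = c := by
  rw [sol_eq, map_add, psi_smul_one, psi_tt, add_zero]

lemma sol_inv (hm : m ≠ 0) {j i : Fin (p ^ (m - 1))} {x : (Fq p m)ˣ}
    (hx : x ∈ Sf p m hm j i) :
    sol p m hm j i (ψ p m (vv p m hm j * (x : Fq p m) + tt p m hm j)) = (x : Fq p m) := by
  rw [mem_Sf] at hx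
  set zz := vv p m hm j * (x : Fq p m) + tt p m hm j with hzz
  have h1 : zz = (ψ p m zz) • (1 : Fq p m) + (tt p m hm i) := by
    have := repr p m zz
    rw [hx] at this
    exact this
  unfold sol
  have h2 : (ψ p m zz) • (1 : Fq p m) + (tt p m hm i - tt p m hm j)
      = vv p m hm j * (x : Fq p m) := by
    have : (ψ p m zz) • (1 : Fq p m) + tt p m hm i = zz := h1.symm
    rw [hzz] at this
    linear_combination this
  rw [h2]
  field_simp [vv_ne p m hm j]

lemma card_Sf_ne (hm : m ≠ 0) {j i : Fin (p ^ (m - 1))} (hij : i ≠ j) :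
    (Sf p m hm j i).card = p := by
  have hsol : ∀ c : ZMod p, sol p m hm j i c ≠ 0 := by
    intro c h0
    have h1 : vv p m hm j * sol p m hm j i c + tt p m hm j = tt p m hm j := by
      rw [h0, mul_zero, zero_add]
    have h2 : eV p m hm i = eV p m hm j := by
      rw [← mem_sol p m hm j i c, h1, prV_tt]
    exact hij ((eV p m hm).injective h2)
  have := Finset.card_bij' (s := Sf p m hm j i) (t := (Finset.univ : Finset (ZMod p)))
    (fun x _ => ψ p m (vv p m hm j * (x : Fq p m) + tt p m hm j))
    (fun c _ => Units.mk0 (sol p m hm j i c) (hsol c))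
    (fun x hx => Finset.mem_univ _)
    (fun c _ => by
      rw [mem_Sf]
      exact mem_sol p m hm j i c)
    (fun x hx => by
      apply Units.ext
      exact sol_inv p m hm hx)
    (fun c _ => psi_sol p m hm j i c)
  rw [this, Finset.card_univ, ZMod.card]

lemma card_Sf_eq (hm : m ≠ 0) (j : Fin (p ^ (m - 1))) :
    (Sf p m hm j j).card = p - 1 := by
  have hsol : ∀ c : ZMod p, c ≠ 0 → sol p m hm j j c ≠ 0 := by
    intro c hc h0
    have h1 : vv p m hm j * sol p m hm j j c + tt p m hm j = tt p m hm j := by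
      rw [h0, mul_zero, zero_add]
    have h2 : ψ p m (tt p m hm j) = c := by
      rw [← h1, psi_sol]
    rw [psi_tt] at h2
    exact hc h2.symm
  have := Finset.card_bij' (s := Sf p m hm j j)
    (t := (Finset.univ : Finset (ZMod p)).filter (fun c => c ≠ 0))
    (fun x _ => ψ p m (vv p m hm j * (x : Fq p m) + tt p m hm j))
    (fun c hc => Units.mk0 (sol p m hm j j c)
      (hsol c (by simpa using (Finset.mem_filter.mp hc).2)))
    (fun x hx => by
      simp only [Finset.mem_filter, Finset.mem_univ, true_and]
      intro h0
      have h1 := sol_inv p m hm hx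
      rw [h0] at h1
      have h2 : sol p m hm j j 0 = 0 := by
        unfold sol
        simp
      rw [h2] at h1
      exact Units.ne_zero x h1.symm)
    (fun c _ => by
      rw [mem_Sf]
      exact mem_sol p m hm j j c)
    (fun x hx => by
      apply Units.ext
      exact sol_inv p m hm hx)
    (fun c _ => psi_sol p m hm j j c)
  rw [this, Finset.filter_ne', Finset.card_erase_of_mem (Finset.mem_univ _),
    Finset.card_univ, ZMod.card]

lemma card_AA_mem (hm : m ≠ 0) (j i : Fin (p ^ (m - 1))) :
    (AA p m hm j i).card ∈ ({p, p - 1} : Set ℕ) := by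
  rw [AA, Finset.card_map]
  by_cases hij : i = j
  · subst hij
    rw [card_Sf_eq]
    exact Set.mem_insert_iff.mpr (Or.inr rfl)
  · rw [card_Sf_ne p m hm hij]
    exact Set.mem_insert _ _

lemma msum_filter {ι α : Type*} (s : Finset ι) (f : ι → Multiset α) (P : α → Prop)
    [DecidablePred P] :
    (∑ i ∈ s, f i).filter P = ∑ i ∈ s, (f i).filter P := by
  induction s using Finset.cons_induction with
  | empty => simp
  | cons a s ha ih => rw [Finset.sum_cons, Finset.sum_cons, Multiset.filter_add, ih]

lemma msum_card {ι α : Type*} (s : Finset ι) (f : ι → Multiset α) :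
    Multiset.card (∑ i ∈ s, f i) = ∑ i ∈ s, Multiset.card (f i) := by
  induction s using Finset.cons_induction with
  | empty => simp
  | cons a s ha ih => rw [Finset.sum_cons, Finset.sum_cons, Multiset.card_add, ih]

lemma N_cast (hm : m ≠ 0) : ((NN p m : ℕ) : ZMod p) = -1 := by
  have h1 : (1:ℕ) ≤ p ^ m := Nat.one_le_pow _ _ (Fact.out : p.Prime).pos
  show (((p ^ m - 1 : ℕ)) : ZMod p) = -1
  rw [Nat.cast_sub h1]
  rw [Nat.cast_pow, Nat.cast_one]
  rw [ZMod.natCast_self, zero_pow hm, zero_sub]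

lemma crt_theta (hm : m ≠ 0) (a : ZMod p) (x : (Fq p m)ˣ) :
    (crt p m hm) (Θ p m hm a x) = (a, Ind p m hm x) :=
  (crt p m hm).apply_symm_apply _

lemma inSub_iff (hm : m ≠ 0) (w : ZMod (p * NN p m)) :
    inSub (p * NN p m) (NN p m) w ↔ ((crt p m hm) w).2 = 0 := by
  constructor
  · rintro ⟨y0, rfl⟩
    rw [map_mul]
    have h1 : ((crt p m hm) ((NN p m : ℕ) : ZMod (p * NN p m))).2 = 0 := by
      rw [map_natCast]
      show ((NN p m : ℕ) : ZMod (NN p m)) = 0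
      exact ZMod.natCast_self _
    show ((crt p m hm) ((NN p m : ℕ) : ZMod (p * NN p m))).2 * ((crt p m hm) y0).2 = 0
    rw [h1, zero_mul]
  · intro h
    refine ⟨(crt p m hm).symm (-((crt p m hm) w).1, 0), ?_⟩
    apply (crt p m hm).injective
    rw [map_mul, map_natCast, (crt p m hm).apply_symm_apply]
    have : ((NN p m : ℕ) : ZMod p × ZMod (NN p m))
        = (((NN p m : ℕ) : ZMod p), ((NN p m : ℕ) : ZMod (NN p m))) := rfl
    rw [this, ZMod.natCast_self, N_cast p m hm]
    ext
    · show ((crt p m hm) w).1 = (-1) * (-((crt p m hm) w).1)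
      ring
    · show ((crt p m hm) w).2 = 0 * (0 : ZMod (NN p m))
      rw [h, zero_mul]

lemma csr (hm : m ≠ 0) (j : Fin (p ^ (m - 1))) :
    IsCSR (p * NN p m) (NN p m) (blockElems (AA p m hm j)) := by
  intro y
  unfold blockElems
  have h0 : ∀ i : Fin (p ^ (m - 1)),
      (AA p m hm j i).val = (Sf p m hm j i).val.map (θf p m hm j) :=
    fun i => Finset.map_val _ _
  rw [Finset.sum_congr rfl (fun i _ => h0 i)]
  rw [msum_filter, msum_card]
  set s0 := ((crt p m hm) y).2 with hs0
  set x₀ := Additive.toMul ((ℓe p m hm) s0) with hx₀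
  have hInd : Ind p m hm x₀ = s0 := by
    unfold Ind
    rw [hx₀]
    simp
  have hP : ∀ x : (Fq p m)ˣ,
      (inSub (p * NN p m) (NN p m) (y - θf p m hm j x)) ↔ x = x₀ := by
    intro x
    rw [inSub_iff p m hm]
    rw [map_sub]
    unfold θf
    rw [crt_theta]
    show ((crt p m hm) y).2 - Ind p m hm x = 0 ↔ _
    constructor
    · intro h
      rw [← hs0] at h
      have h2 : Ind p m hm x = Ind p m hm x₀ := by
        rw [hInd]
        linear_combination -h
      exact Ind_inj p m hm h2
    · rintro rfl
      rw [hInd, ← hs0, sub_self]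
  have hterm : ∀ i : Fin (p ^ (m - 1)),
      Multiset.card (((Sf p m hm j i).val.map (θf p m hm j)).filter
        (fun t => inSub (p * NN p m) (NN p m) (y - t)))
      = if x₀ ∈ Sf p m hm j i then 1 else 0 := by
    intro i
    rw [Multiset.filter_map, Multiset.card_map]
    have hc : ((Sf p m hm j i).val.filter
        ((fun t => inSub (p * NN p m) (NN p m) (y - t)) ∘ (θf p m hm j)))
        = ((Sf p m hm j i).val.filter (fun x => x = x₀)) := by
      apply Multiset.filter_congr
      intro x _
      exact hP x
    rw [hc]
    have hcard : Multiset.card ((Sf p m hm j i).val.filter (fun x => x = x₀))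
        = ((Sf p m hm j i).filter (fun x => x = x₀)).card := rfl
    rw [hcard, Finset.filter_eq']
    split_ifs with h
    · rw [Finset.card_singleton]
    · rw [Finset.card_empty]
  rw [Finset.sum_congr rfl (fun i _ => hterm i)]
  set i₀ := (eV p m hm).symm (prV p m (vv p m hm j * (x₀ : Fq p m) + tt p m hm j)) with hi₀
  have hiff : ∀ i, (x₀ ∈ Sf p m hm j i) ↔ i = i₀ := by
    intro i
    rw [mem_Sf]
    constructor
    · intro h
      apply (eV p m hm).injective
      rw [← h, hi₀, Equiv.apply_symm_apply]
    · rintro rfl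
      rw [hi₀, Equiv.apply_symm_apply]
  have : ∀ i ∈ Finset.univ, (if x₀ ∈ Sf p m hm j i then (1:ℕ) else 0)
      = if i = i₀ then 1 else 0 := fun i _ => if_congr (hiff i) rfl rfl
  rw [Finset.sum_congr rfl this]
  rw [Fintype.sum_ite_eq' i₀ (fun _ => (1:ℕ))]

end S4

theorem stmt4 (p m : ℕ) (hp : p.Prime) (hm : 1 < m) :
    ∃ K : Fin (p ^ (m - 1)) → Set ℕ,
      (∀ j, K j ⊆ {p, p - 1}) ∧
      ∃ A : Fin (p ^ (m - 1)) → Fin (p ^ (m - 1)) → Finset (ZMod (p * (p ^ m - 1))),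
        IsBNCDP (p * (p ^ m - 1)) (p ^ (m - 1)) (p ^ (m - 1)) 1 K A ∧
        ∀ j, IsCSR (p * (p ^ m - 1)) (p ^ m - 1) (blockElems (A j)) := by
  haveI : Fact p.Prime := ⟨hp⟩
  have hm0 : m ≠ 0 := by omega
  refine ⟨fun _ => {p, p - 1}, fun j => le_refl _, S4.AA p m hm0, ⟨?_, ?_⟩, ?_⟩
  · intro j
    exact ⟨fun i => S4.card_AA_mem p m hm0 j i,
      fun z _ => S4.count_deltaList_le p m hm0 j z⟩
  · intro j j' hjj z
    exact S4.count_deltaE_le p m hm0 hjj z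
  · intro j
    exact S4.csr p m hm0 j
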